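/- Let K be a field of characteristic zero, let L ∈ K⟦X⟧ be a formal power series whose constant coefficient is nonzero, and let w ∈ K⟦X⟧ be a formal power series with constant coefficient 0 satisfying w = X · (L ∘ w), where L ∘ w denotes substitution of w into L. Then L ∘ w is a unit in K⟦X⟧, and for every integer n ≥ 3 one has (n - 2) · coeff_n((L ∘ w)^(-2)) = -2 · coeff_n(L^(n-2)), where coeff_n denotes the coefficient of X^n. -/

import Mathlib

open PowerSeries

/-- Substitution (composition) `f ∘ w` of a formal power series `w` with zero
constant term into a formal power series `f`: since `coeff n (w ^ j) = 0` for
`j > n` when `w` has zero constant term, the coefficient of `X^n` in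
`∑_{j≥0} (coeff_j f)·w^j` is the finite sum below. -/
noncomputable def PowerSeries.substComp {K : Type*} [CommRing K]
    (w f : PowerSeries K) : PowerSeries K :=
  PowerSeries.mk fun n =>
    ∑ j ∈ Finset.range (n + 1), PowerSeries.coeff j f * PowerSeries.coeff n (w ^ j)

open Finset

namespace LagrangeAux

variable {K : Type*} [CommRing K] {w : PowerSeries K}

lemma coeff_w_pow (hw0 : constantCoeff w = 0) {n j : ℕ} (h : n < j) :
    coeff n (w ^ j) = 0 :=
  X_pow_dvd_iff.mp (pow_dvd_pow_of_dvd (X_dvd_iff.mpr hw0) j) n h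

lemma coeff_substComp (f : PowerSeries K) (n : ℕ) :
    coeff n (substComp w f) = ∑ j ∈ range (n + 1), coeff j f * coeff n (w ^ j) :=
  coeff_mk _ _

lemma coeff_aeval (hw0 : constantCoeff w = 0) (P : Polynomial K) (n : ℕ) :
    coeff n (Polynomial.aeval w P) = ∑ j ∈ range (n + 1), P.coeff j * coeff n (w ^ j) := by
  have hdeg : P.natDegree < max (P.natDegree + 1) (n + 1) :=
    lt_of_lt_of_le (Nat.lt_succ_self _) (le_max_left _ _)
  rw [Polynomial.aeval_eq_sum_range' hdeg, map_sum,
    ← Finset.sum_subset (Finset.range_subset_range.mpr (le_max_right (P.natDegree + 1) (n + 1)))]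
  · refine Finset.sum_congr rfl fun j hj => ?_
    rw [map_smul, smul_eq_mul]
  · intro j hj hj'
    have hn : n < j := by
      simp only [Finset.mem_range, not_lt] at hj'
      omega
    rw [map_smul, smul_eq_mul, coeff_w_pow hw0 hn, mul_zero]

lemma coeff_substComp_eq_aeval (hw0 : constantCoeff w = 0) (f : PowerSeries K)
    {n m : ℕ} (h : n < m) :
    coeff n (substComp w f) = coeff n (Polynomial.aeval w (trunc m f)) := by
  rw [coeff_substComp, coeff_aeval hw0]
  refine Finset.sum_congr rfl fun j hj => ?_
  rw [coeff_trunc, if_pos (by simp only [Finset.mem_range] at hj; omega)]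

lemma substComp_mul (hw0 : constantCoeff w = 0) (f g : PowerSeries K) :
    substComp w (f * g) = substComp w f * substComp w g := by
  ext n
  rw [PowerSeries.coeff_mul, coeff_substComp_eq_aeval hw0 (f * g) (Nat.lt_succ_self n)]
  have hsum : ∀ p ∈ antidiagonal n,
      coeff p.1 (substComp w f) * coeff p.2 (substComp w g)
        = coeff p.1 (Polynomial.aeval w (trunc (n + 1) f))
          * coeff p.2 (Polynomial.aeval w (trunc (n + 1) g)) := by
    intro p hp
    rw [Finset.HasAntidiagonal.mem_antidiagonal] at hp
    rw [coeff_substComp_eq_aeval hw0 f (by omega : p.1 < n + 1),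
      coeff_substComp_eq_aeval hw0 g (by omega : p.2 < n + 1)]
  rw [Finset.sum_congr rfl hsum, ← PowerSeries.coeff_mul, ← map_mul]
  rw [coeff_aeval hw0, coeff_aeval hw0]
  refine Finset.sum_congr rfl fun j hj => ?_
  have hjn : j < n + 1 := Finset.mem_range.mp hj
  congr 1
  have h1 := PowerSeries.trunc_trunc_mul_trunc (n := n + 1) f g
  calc (trunc (n + 1) (f * g)).coeff j
      = (trunc (n + 1) ((trunc (n + 1) f : PowerSeries K) * (trunc (n + 1) g : PowerSeries K))).coeff j := by
        rw [h1]
    _ = coeff j ((trunc (n + 1) f : PowerSeries K) * (trunc (n + 1) g : PowerSeries K)) := by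
        rw [coeff_trunc, if_pos hjn]
    _ = (trunc (n + 1) f * trunc (n + 1) g).coeff j := by
        rw [← Polynomial.coe_mul, Polynomial.coeff_coe]

lemma substComp_one : substComp w (1 : PowerSeries K) = 1 := by
  ext n
  rw [coeff_substComp]
  rw [Finset.sum_eq_single 0]
  · simp
  · intro j hj hj0
    simp [PowerSeries.coeff_one, hj0]
  · simp

lemma substComp_X (hw0 : constantCoeff w = 0) : substComp w (X : PowerSeries K) = w := by
  ext n
  rw [coeff_substComp]
  rcases Nat.eq_zero_or_pos n with hn | hn
  · subst hn
    simp [PowerSeries.coeff_X, hw0]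
  · rw [Finset.sum_eq_single 1]
    · simp [PowerSeries.coeff_X]
    · intro j hj hj1
      simp [PowerSeries.coeff_X, hj1]
    · intro h
      simp only [Finset.mem_range] at h
      omega

lemma substComp_pow (hw0 : constantCoeff w = 0) (f : PowerSeries K) (k : ℕ) :
    substComp w (f ^ k) = substComp w f ^ k := by
  induction k with
  | zero => simpa using substComp_one
  | succ k ih => rw [pow_succ, pow_succ, substComp_mul hw0, ih]

lemma constantCoeff_substComp (f : PowerSeries K) :
    constantCoeff (substComp w f) = constantCoeff f := by
  have := coeff_substComp (w := w) f 0
  simpa using this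

end LagrangeAux


namespace LagrangeAux2

variable {K : Type*} [CommRing K]

/-- coefficient of `m` in `(d⁄dX f) * h` as a weighted range sum. -/
lemma coeff_deriv_mul (f h : PowerSeries K) (m : ℕ) :
    coeff m (d⁄dX K f * h)
      = ∑ k ∈ range (m + 2), (k : K) * coeff k f * coeff (m + 1 - k) h := by
  rw [PowerSeries.coeff_mul,
    Finset.Nat.sum_antidiagonal_eq_sum_range_succ
      (fun a b => coeff a (d⁄dX K f) * coeff b h) m]
  rw [Finset.sum_range_succ' (fun k => (k : K) * coeff k f * coeff (m + 1 - k) h) (m + 1)]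
  simp only [Nat.cast_zero, zero_mul, add_zero]
  refine Finset.sum_congr rfl fun a ha => ?_
  rw [PowerSeries.coeff_derivative]
  have h1 : m + 1 - (a + 1) = m - a := by omega
  rw [h1]
  push_cast
  ring

/-- `(n+1) * ∑ i ≤ m, i * fᵢ * [X^{m-i}] fⁿ = m * [Xᵐ] f^{n+1}`. -/
lemma key_deriv (f : PowerSeries K) (n m : ℕ) :
    ((n : K) + 1) * ∑ i ∈ range (m + 1), (i : K) * coeff i f * coeff (m - i) (f ^ n)
      = (m : K) * coeff m (f ^ (n + 1)) := by
  rcases Nat.eq_zero_or_pos m with hm | hm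
  · subst hm
    simp
  · obtain ⟨m', rfl⟩ : ∃ m', m = m' + 1 := ⟨m - 1, by omega⟩
    rw [← coeff_deriv_mul f (f ^ n) m']
    have hD : d⁄dX K (f ^ (n + 1)) = (n + 1) • (f ^ n * d⁄dX K f) := by
      rw [Derivation.leibniz_pow]
      simp [smul_eq_mul]
    have : coeff m' (d⁄dX K (f ^ (n + 1))) = ((n : K) + 1) * coeff m' (f ^ n * d⁄dX K f) := by
      rw [hD, map_nsmul, nsmul_eq_mul]
      push_cast
      ring
    rw [PowerSeries.coeff_derivative] at this
    rw [mul_comm (d⁄dX K f) (f ^ n), ← this]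
    push_cast
    ring

/-- `[Xᵐ] f^{n+1} = ∑ i ≤ m, fᵢ * [X^{m-i}] fⁿ`. -/
lemma coeff_pow_succ (f : PowerSeries K) (n m : ℕ) :
    coeff m (f ^ (n + 1)) = ∑ i ∈ range (m + 1), coeff i f * coeff (m - i) (f ^ n) := by
  rw [pow_succ', PowerSeries.coeff_mul,
    Finset.Nat.sum_antidiagonal_eq_sum_range_succ (fun a b => coeff a f * coeff b (f ^ n)) m]

end LagrangeAux2


open LagrangeAux LagrangeAux2

namespace LagrangeCore

variable {K : Type*} [Field K] [CharZero K]

lemma core (L w : PowerSeries K)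
    (hw0 : constantCoeff w = 0)
    (hw : w = X * substComp w L) :
    ∀ n k : ℕ, (n : K) * coeff n (w ^ k)
      = (k : K) * (if k ≤ n then coeff (n - k) (L ^ n) else 0) := by
  intro n
  induction n with
  | zero =>
    intro k
    rcases Nat.eq_zero_or_pos k with hk | hk
    · subst hk; simp
    · rw [if_neg (by omega)]
      simp [coeff_w_pow hw0 hk]
  | succ n ih =>
    intro k
    rcases Nat.eq_zero_or_pos k with hk | hk
    · subst hk
      simp [PowerSeries.coeff_one]
    by_cases hkn : k ≤ n + 1
    swap
    · rw [if_neg hkn, coeff_w_pow hw0 (by omega), mul_zero, mul_zero]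
    rw [if_pos hkn]
    obtain ⟨k', rfl⟩ : ∃ k', k = k' + 1 := ⟨k - 1, by omega⟩
    have hk'n : k' ≤ n := by omega
    -- the recurrence
    have hfac : w ^ (k' + 1) = X * substComp w (L * X ^ k') := by
      rw [substComp_mul hw0, substComp_pow hw0, substComp_X hw0]
      calc w ^ (k' + 1) = (X * substComp w L) * w ^ k' := by rw [← hw, pow_succ']
        _ = X * (substComp w L * w ^ k') := by ring
    have hrec : coeff (n + 1) (w ^ (k' + 1))
        = ∑ j ∈ range (n + 1), coeff j (L * X ^ k') * coeff n (w ^ j) := by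
      rw [hfac, coeff_succ_X_mul, coeff_substComp]
    -- coefficients of L * X^k'
    have hcoeffLX : ∀ j : ℕ, coeff j (L * X ^ k')
        = if k' ≤ j then coeff (j - k') L else 0 := fun j =>
      PowerSeries.coeff_mul_X_pow' L k' j
    rcases Nat.eq_zero_or_pos n with hn | hn
    · -- n = 0, k' = 0
      subst hn
      have hk0 : k' = 0 := by omega
      subst hk0
      rw [hrec]
      simp [hcoeffLX, pow_one]
    -- main case: n ≥ 1
    set m := n - k' with hm
    have hmn : k' + m = n := by omega
    -- multiply recurrence by n and use ih
    have step1 : (n : K) * coeff (n + 1) (w ^ (k' + 1))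
        = ∑ i ∈ range (m + 1), coeff i L * ((i + k' : K) * coeff (m - i) (L ^ n)) := by
      rw [hrec, Finset.mul_sum]
      have congr1 : ∀ j ∈ range (n + 1),
          (n : K) * (coeff j (L * X ^ k') * coeff n (w ^ j))
            = coeff j (L * X ^ k') * ((j : K) * (if j ≤ n then coeff (n - j) (L ^ n) else 0)) := by
        intro j hj
        rw [← ih j]; ring
      rw [Finset.sum_congr rfl congr1]
      -- kill the terms with j < k' and reindex j = i + k'
      rw [(Finset.range_eq_Ico (n + 1) : Finset.range (n + 1) = Finset.Ico 0 (n + 1)), ← Finset.sum_Ico_consecutive _ (Nat.zero_le k') (by omega : k' ≤ n + 1)]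
      have hzero : ∑ j ∈ Finset.Ico 0 k', coeff j (L * X ^ k')
          * ((j : K) * (if j ≤ n then coeff (n - j) (L ^ n) else 0)) = 0 := by
        refine Finset.sum_eq_zero fun j hj => ?_
        rw [Finset.mem_Ico] at hj
        rw [hcoeffLX, if_neg (by omega), zero_mul]
      rw [hzero, zero_add, Finset.sum_Ico_eq_sum_range]
      have hlen : n + 1 - k' = m + 1 := by omega
      rw [hlen]
      refine Finset.sum_congr rfl fun i hi => ?_
      rw [Finset.mem_range] at hi
      rw [hcoeffLX, if_pos (by omega), if_pos (by omega)]
      have e1 : k' + i - k' = i := by omega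
      have e2 : n - (k' + i) = m - i := by omega
      rw [e1, e2]
      push_cast
      ring
    -- split the sum
    have split : ∑ i ∈ range (m + 1), coeff i L * ((i + k' : K) * coeff (m - i) (L ^ n))
        = (∑ i ∈ range (m + 1), (i : K) * coeff i L * coeff (m - i) (L ^ n))
          + (k' : K) * ∑ i ∈ range (m + 1), coeff i L * coeff (m - i) (L ^ n) := by
      rw [Finset.mul_sum, ← Finset.sum_add_distrib]
      refine Finset.sum_congr rfl fun i hi => ?_
      ring
    have hD1 : ∑ i ∈ range (m + 1), coeff i L * coeff (m - i) (L ^ n)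
        = coeff m (L ^ (n + 1)) := (coeff_pow_succ L n m).symm
    have hD2 : ((n : K) + 1) * ∑ i ∈ range (m + 1), (i : K) * coeff i L * coeff (m - i) (L ^ n)
        = (m : K) * coeff m (L ^ (n + 1)) := key_deriv L n m
    -- combine
    have hnK : (n : K) ≠ 0 := Nat.cast_ne_zero.mpr (by omega)
    apply mul_left_cancel₀ hnK
    push_cast
    calc (n : K) * (((n : K) + 1) * coeff (n + 1) (w ^ (k' + 1)))
        = ((n : K) + 1) * ((n : K) * coeff (n + 1) (w ^ (k' + 1))) := by ring
      _ = ((n : K) + 1) * ((∑ i ∈ range (m + 1), (i : K) * coeff i L * coeff (m - i) (L ^ n))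
            + (k' : K) * ∑ i ∈ range (m + 1), coeff i L * coeff (m - i) (L ^ n)) := by
          rw [step1, split]
      _ = (m : K) * coeff m (L ^ (n + 1))
            + ((n : K) + 1) * (k' : K) * coeff m (L ^ (n + 1)) := by
          rw [mul_add, hD2, hD1]; ring
      _ = (n : K) * (((k' : K) + 1) * coeff (n - k') (L ^ (n + 1))) := by
          have e4 : (m : K) = (n : K) - (k' : K) := by
            rw [hm, Nat.cast_sub hk'n]
          rw [← hm, e4]
          ring
    
end LagrangeCore


open Finset LagrangeAux LagrangeAux2 LagrangeCore in
/-- The Lagrange-Bürmann type coefficient formula used in the paper: if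
`w = X · (L ∘ w)` with `L(0) ≠ 0` and `w(0) = 0`, then `L ∘ w` is a unit and
`(n-2) · coeff_n((L∘w)⁻²) = -2 · coeff_n(L^{n-2})` for `n ≥ 3`. -/
theorem lagrange_burmann_inverse_square {K : Type*} [Field K] [CharZero K]
    (L w : PowerSeries K)
    (hL : PowerSeries.constantCoeff L ≠ 0)
    (hw0 : PowerSeries.constantCoeff w = 0)
    (hw : w = PowerSeries.X * PowerSeries.substComp w L) :
    IsUnit (PowerSeries.substComp w L) ∧
      ∀ n : ℕ, 3 ≤ n →
        ((n : K) - 2) * PowerSeries.coeff n ((PowerSeries.substComp w L)⁻¹ ^ 2)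
          = -2 * PowerSeries.coeff n (L ^ (n - 2)) := by
  set g := PowerSeries.substComp w L with hg
  have hg0 : constantCoeff g = constantCoeff L := constantCoeff_substComp L
  have hgne : constantCoeff g ≠ 0 := by rw [hg0]; exact hL
  have hunit : IsUnit g := by
    rw [PowerSeries.isUnit_iff_constantCoeff]
    exact (isUnit_iff_ne_zero).mpr hgne
  refine ⟨hunit, fun n hn => ?_⟩
  -- L⁻¹ has nonzero constant coefficient, inverse relations
  have hLinv : L⁻¹ * L = 1 := PowerSeries.inv_mul_cancel L hL
  have hginv : g⁻¹ * g = 1 := PowerSeries.inv_mul_cancel g hgne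
  -- g⁻¹ = substComp w L⁻¹
  have hSinv : substComp w L⁻¹ * g = 1 := by
    rw [hg, ← substComp_mul hw0, hLinv, substComp_one]
  have hinv_eq : g⁻¹ = substComp w L⁻¹ := by
    calc g⁻¹ = g⁻¹ * (substComp w L⁻¹ * g) := by rw [hSinv, mul_one]
      _ = substComp w L⁻¹ * (g⁻¹ * g) := by ring
      _ = substComp w L⁻¹ := by rw [hginv, mul_one]
  set F : PowerSeries K := L⁻¹ ^ 2 with hF
  have hSF : g⁻¹ ^ 2 = substComp w F := by
    rw [hinv_eq, hF, substComp_pow hw0]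
  -- n * coeff n (S F) = coeff (n-1) (d F * L^n)
  have hcore := core L w hw0 hw
  have step1 : (n : K) * coeff n (substComp w F)
      = ∑ k ∈ range (n + 1), (k : K) * coeff k F * coeff (n - k) (L ^ n) := by
    rw [coeff_substComp, Finset.mul_sum]
    refine Finset.sum_congr rfl fun k hk => ?_
    rw [Finset.mem_range] at hk
    have := hcore n k
    rw [if_pos (by omega)] at this
    calc (n : K) * (coeff k F * coeff n (w ^ k))
        = coeff k F * ((n : K) * coeff n (w ^ k)) := by ring
      _ = coeff k F * ((k : K) * coeff (n - k) (L ^ n)) := by rw [this]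
      _ = (k : K) * coeff k F * coeff (n - k) (L ^ n) := by ring
  obtain ⟨n', rfl⟩ : ∃ n', n = n' + 1 := ⟨n - 1, by omega⟩
  have step2 : coeff n' (d⁄dX K F * L ^ (n' + 1))
      = ∑ k ∈ range (n' + 2), (k : K) * coeff k F * coeff (n' + 1 - k) (L ^ (n' + 1)) :=
    coeff_deriv_mul F (L ^ (n' + 1)) n'
  have step12 : ((n' + 1 : ℕ) : K) * coeff (n' + 1) (substComp w F)
      = coeff n' (d⁄dX K F * L ^ (n' + 1)) := by
    rw [step1, step2]
  -- compute d F * L^(n+1)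
  have hd3 : 3 ≤ n' + 1 := hn
  have hDF : d⁄dX K F * L ^ (n' + 1) = (-2 : K⟦X⟧) * (L ^ (n' + 1 - 3) * d⁄dX K L) := by
    rw [hF, Derivation.leibniz_pow]
    rw [PowerSeries.derivative_inv' L]
    have hsplit : L ^ (n' + 1) = L ^ 3 * L ^ (n' + 1 - 3) := by
      rw [← pow_add]
      congr 1
      omega
    have hinv3 : (L⁻¹) ^ 3 * L ^ 3 = 1 := by
      rw [← mul_pow, hLinv, one_pow]
    calc (2 : ℕ) • (L⁻¹ ^ (2 - 1) • (-L⁻¹ ^ 2 * d⁄dX K L)) * L ^ (n' + 1)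
        = (-2 : K⟦X⟧) * ((L⁻¹ ^ 3 * L ^ 3) * (L ^ (n' + 1 - 3) * d⁄dX K L)) := by
          rw [hsplit]
          simp only [nsmul_eq_mul, smul_eq_mul, pow_one]
          push_cast
          ring
      _ = (-2 : K⟦X⟧) * (L ^ (n' + 1 - 3) * d⁄dX K L) := by rw [hinv3, one_mul]
  -- derivative of L^(n-1)
  have hpow : d⁄dX K (L ^ (n' + 1 - 2)) = ((n' + 1 - 2 : ℕ)) • (L ^ (n' + 1 - 3) * d⁄dX K L) := by
    rw [Derivation.leibniz_pow]
    have : n' + 1 - 2 - 1 = n' + 1 - 3 := by omega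
    rw [this]
    simp [smul_eq_mul, mul_comm]
  have hcoeffpow : ((n' + 1 - 2 : ℕ) : K) * coeff n' (L ^ (n' + 1 - 3) * d⁄dX K L)
      = ((n' + 1 : ℕ) : K) * coeff (n' + 1) (L ^ (n' + 1 - 2)) := by
    have h1 : coeff n' (d⁄dX K (L ^ (n' + 1 - 2)))
        = ((n' + 1 - 2 : ℕ) : K) * coeff n' (L ^ (n' + 1 - 3) * d⁄dX K L) := by
      rw [hpow, map_nsmul, nsmul_eq_mul]
    rw [PowerSeries.coeff_derivative] at h1
    rw [← h1]
    push_cast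
    ring
  -- assemble
  have hnK : ((n' + 1 : ℕ) : K) ≠ 0 := Nat.cast_ne_zero.mpr (by omega)
  apply mul_left_cancel₀ hnK
  have hc2 : ((n' + 1 : ℕ) : K) - 2 = ((n' + 1 - 2 : ℕ) : K) := by
    rw [Nat.cast_sub (by omega : 2 ≤ n' + 1)]
    norm_num
  calc ((n' + 1 : ℕ) : K) * ((((n' + 1 : ℕ) : K) - 2) * coeff (n' + 1) (g⁻¹ ^ 2))
      = (((n' + 1 : ℕ) : K) - 2) * (((n' + 1 : ℕ) : K) * coeff (n' + 1) (substComp w F)) := by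
        rw [hSF]; ring
    _ = (((n' + 1 : ℕ) : K) - 2) * coeff n' (d⁄dX K F * L ^ (n' + 1)) := by rw [step12]
    _ = (((n' + 1 : ℕ) : K) - 2) * (-2 * coeff n' (L ^ (n' + 1 - 3) * d⁄dX K L)) := by
        rw [hDF]
        congr 1
        have h2 : ((-2 : K⟦X⟧)) * (L ^ (n' + 1 - 3) * d⁄dX K L)
            = -((L ^ (n' + 1 - 3) * d⁄dX K L) + (L ^ (n' + 1 - 3) * d⁄dX K L)) := by ring
        rw [h2, map_neg, map_add]
        ring
    _ = -2 * (((n' + 1 - 2 : ℕ) : K) * coeff n' (L ^ (n' + 1 - 3) * d⁄dX K L)) := by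
        rw [hc2]; ring
    _ = -2 * (((n' + 1 : ℕ) : K) * coeff (n' + 1) (L ^ (n' + 1 - 2))) := by rw [hcoeffpow]
    _ = ((n' + 1 : ℕ) : K) * (-2 * coeff (n' + 1) (L ^ (n' + 1 - 2))) := by ring
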